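/- Let f : ℤ_{≥2} → ℝ be a function and A > 0 a constant with 2 ≤ f(q) ≤ A·log(q) for all q ≥ 2, and set ε(q) := 2/√(f(q)·log(q)). Then there exists a constant C > 0 (depending only on A) such that for every integer q ≥ 2 and every s = σ + it ∈ ℂ with 0 < σ < 1 lying in R₁ ∪ R₂ ∪ R₃, where R₁ = { |t| ≥ 1 }, R₂ = { 0 < σ(1−σ) < (1/f(q))(1 − 1/f(q)), 1 − 1/√(f(q)log(q)) ≤ |t| < 1 }, and R₃ = { 1/f(q) ≤ σ ≤ 1 − 1/f(q), |t| < 1 }, one has |Π_0(s) − Π_{ε(q)}(s)| ≤ C·√(f(q)/log(q))·Π_{ε(q)}(s). -/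

import Mathlib

set_option maxHeartbeats 4000000

noncomputable def pairingFn (ε : ℝ) (s : ℂ) : ℝ :=
  ((s + ε)⁻¹ + ((starRingEnd ℂ) s + ε)⁻¹ + (1 - s + ε)⁻¹ +
    (1 - (starRingEnd ℂ) s + ε)⁻¹).re

lemma pairingFn_eq (ε : ℝ) (s : ℂ) :
    pairingFn ε s = 2*(s.re + ε) / ((s.re + ε)^2 + s.im^2)
      + 2*(1 - s.re + ε) / ((1 - s.re + ε)^2 + s.im^2) := by
  simp only [pairingFn, Complex.add_re, Complex.inv_re, Complex.normSq_apply, Complex.sub_re,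
    Complex.one_re, Complex.conj_re, Complex.conj_im, Complex.add_im, Complex.sub_im,
    Complex.one_im, Complex.ofReal_re, Complex.ofReal_im]
  ring

lemma diff_eq (x t ε : ℝ) (h1 : x^2+t^2 ≠ 0) (h2 : (x+ε)^2+t^2 ≠ 0) :
    2*x/(x^2+t^2) - 2*(x+ε)/((x+ε)^2+t^2)
      = 2*ε*(x*(x+ε) - t^2)/((x^2+t^2)*((x+ε)^2+t^2)) := by
  field_simp; ring

lemma termR3 (x t ε F : ℝ) (hx : 0 < x) (hε : 0 < ε) (hF : 1 ≤ F * x) :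
    |2*x/(x^2+t^2) - 2*(x+ε)/((x+ε)^2+t^2)|
      ≤ 2*ε*F * (2*(x+ε)/((x+ε)^2+t^2)) := by
  have hN1 : 0 < x^2+t^2 := by positivity
  have hN2 : 0 < (x+ε)^2+t^2 := by positivity
  rw [diff_eq x t ε hN1.ne' hN2.ne', abs_div, abs_of_pos (mul_pos hN1 hN2)]
  have hrw : 2*ε*F * (2*(x+ε)/((x+ε)^2+t^2)) = (4*ε*F*(x+ε))/((x+ε)^2+t^2) := by ring
  rw [hrw, div_le_div_iff₀ (mul_pos hN1 hN2) hN2]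
  have key : (x+ε)*x + t^2 ≤ F*(x+ε)*(x^2+t^2) := by
    nlinarith [mul_nonneg (sub_nonneg.mpr hF) (by positivity : (0:ℝ) ≤ (x+ε)*(x^2+t^2)),
      mul_nonneg hε.le (sq_nonneg t), hx]
  have h1 : |2*ε*(x*(x+ε) - t^2)| ≤ 4*ε*F*(x+ε)*(x^2+t^2) := by
    rcases abs_cases (2*ε*(x*(x+ε) - t^2)) with ⟨he, _⟩ | ⟨he, _⟩ <;> rw [he] <;>
      nlinarith [mul_le_mul_of_nonneg_left key hε.le, mul_pos hε hx, sq_nonneg t,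
        mul_nonneg hε.le (sq_nonneg t), mul_nonneg (mul_nonneg hε.le hx.le) (add_pos hx hε).le]
  calc |2*ε*(x*(x+ε) - t^2)| * ((x+ε)^2+t^2)
      ≤ (4*ε*F*(x+ε)*(x^2+t^2)) * ((x+ε)^2+t^2) :=
        mul_le_mul_of_nonneg_right h1 hN2.le
    _ = 4*ε*F*(x+ε) * ((x^2+t^2)*((x+ε)^2+t^2)) := by ring

lemma termB (x t ε : ℝ) (hx : 0 ≤ x) (hx1 : x ≤ 1) (hε : 0 < ε) (hε2 : ε ≤ 2)
    (ht : 0 < t^2) :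
    |2*x/(x^2+t^2) - 2*(x+ε)/((x+ε)^2+t^2)| ≤ 2*ε*(3 + t^2)/(t^2*t^2) := by
  have hN1 : 0 < x^2+t^2 := by positivity
  have hN2 : 0 < (x+ε)^2+t^2 := by positivity
  rw [diff_eq x t ε hN1.ne' hN2.ne', abs_div, abs_of_pos (mul_pos hN1 hN2)]
  have hnum : |2*ε*(x*(x+ε) - t^2)| ≤ 2*ε*(3 + t^2) := by
    have k1 : 0 ≤ ε*(1-x)*(x+ε) := by
      apply mul_nonneg (mul_nonneg hε.le (by linarith)) (by positivity)
    have k2 : 0 ≤ ε*(3-(x+ε)) := mul_nonneg hε.le (by linarith)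
    have k3 : 0 ≤ ε*t^2 := mul_nonneg hε.le ht.le
    rcases abs_cases (2*ε*(x*(x+ε) - t^2)) with ⟨he, _⟩ | ⟨he, _⟩ <;> rw [he] <;> nlinarith
  have hden : t^2*t^2 ≤ (x^2+t^2)*((x+ε)^2+t^2) := by
    have h1 : t^2 ≤ x^2+t^2 := by nlinarith [sq_nonneg x]
    have h2 : t^2 ≤ (x+ε)^2+t^2 := by nlinarith [sq_nonneg (x+ε)]
    exact mul_le_mul h1 h2 ht.le hN1.le
  exact div_le_div₀ (by positivity) hnum (by positivity) hden

lemma Plow (σ t ε : ℝ) (h0 : 0 < σ) (h1 : σ < 1) (hε : 0 < ε) (hε2 : ε ≤ 2) :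
    1/(9 + t^2) ≤ 2*(σ+ε)/((σ+ε)^2+t^2) + 2*(1-σ+ε)/((1-σ+ε)^2+t^2) := by
  have h9 : (0:ℝ) < 9 + t^2 := by positivity
  rcases le_or_gt σ (1/2) with hc | hc
  · have hy : (1:ℝ)/2 ≤ 1-σ := by linarith
    have hN2 : 0 < (1-σ+ε)^2+t^2 := by positivity
    have key : 1/(9+t^2) ≤ 2*(1-σ+ε)/((1-σ+ε)^2+t^2) := by
      rw [div_le_div_iff₀ h9 hN2]
      nlinarith [sq_nonneg t, mul_nonneg hε.le (sq_nonneg t)]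
    have hpos : 0 ≤ 2*(σ+ε)/((σ+ε)^2+t^2) := by positivity
    linarith
  · have hy : (1:ℝ)/2 ≤ σ := le_of_lt hc
    have hN2 : 0 < (σ+ε)^2+t^2 := by positivity
    have key : 1/(9+t^2) ≤ 2*(σ+ε)/((σ+ε)^2+t^2) := by
      rw [div_le_div_iff₀ h9 hN2]
      nlinarith [sq_nonneg t, mul_nonneg hε.le (sq_nonneg t)]
    have hpos : 0 ≤ 2*(1-σ+ε)/((1-σ+ε)^2+t^2) :=
      div_nonneg (by linarith) (by positivity)
    linarith

theorem pairing_close_on_regions (A : ℝ) (hA : 0 < A) :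
    ∃ C > 0, ∀ f : ℕ → ℝ, (∀ q : ℕ, 2 ≤ q → 2 ≤ f q ∧ f q ≤ A * Real.log q) →
      ∀ q : ℕ, 2 ≤ q → ∀ s : ℂ, 0 < s.re → s.re < 1 →
        ((1 ≤ |s.im|) ∨
          (0 < s.re * (1 - s.re) ∧
            s.re * (1 - s.re) < (1 / f q) * (1 - 1 / f q) ∧
            1 - 1 / Real.sqrt (f q * Real.log q) ≤ |s.im| ∧ |s.im| < 1) ∨
          (1 / f q ≤ s.re ∧ s.re ≤ 1 - 1 / f q ∧ |s.im| < 1)) →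
        |pairingFn 0 s - pairingFn (2 / Real.sqrt (f q * Real.log q)) s| ≤
          C * Real.sqrt (f q / Real.log q) *
            pairingFn (2 / Real.sqrt (f q * Real.log q)) s := by
  refine ⟨1000000, by norm_num, ?_⟩
  intro f hf q hq s hσ0 hσ1 hreg
  obtain ⟨hF2, hFA⟩ := hf q hq
  set σ := s.re with hσdef
  set t := s.im with htdef
  set F := f q with hFdef
  set L := Real.log (q:ℝ) with hLdef
  have hq2 : (2:ℝ) ≤ (q:ℝ) := by exact_mod_cast hq
  have hlog2 : (0.6931:ℝ) ≤ Real.log 2 := by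
    have := Real.log_two_gt_d9; linarith
  have hL : (0.6931:ℝ) ≤ L := le_trans hlog2 (Real.log_le_log (by norm_num) hq2)
  have hL0 : (0:ℝ) < L := by linarith
  have hF0 : (0:ℝ) < F := by linarith
  have hFL : (1.38:ℝ) ≤ F * L := by nlinarith
  set E := Real.sqrt (F * L) with hEdef
  have hE117 : (1.17:ℝ) ≤ E := by
    rw [hEdef, show (1.17:ℝ) = Real.sqrt (1.17^2) from (Real.sqrt_sq (by norm_num)).symm]
    apply Real.sqrt_le_sqrt; nlinarith
  have hE0 : (0:ℝ) < E := by linarith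
  set ε := 2 / E with hεdef
  have hε0 : 0 < ε := by positivity
  have hε2 : ε ≤ 2 := by
    rw [hεdef, div_le_iff₀ hE0]; nlinarith
  set S := Real.sqrt (F / L) with hSdef
  have hSE : S * E = F := by
    rw [hSdef, hEdef, ← Real.sqrt_mul (by positivity : (0:ℝ) ≤ F / L),
      show F / L * (F * L) = F^2 by field_simp]
    exact Real.sqrt_sq hF0.le
  have hFε : F * ε = 2 * S := by
    rw [hεdef, ← hSE]; field_simp
  have hεS : ε ≤ S := by
    nlinarith [mul_nonneg (by linarith : (0:ℝ) ≤ F - 2) hε0.le]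
  have hS0 : 0 < S := lt_of_lt_of_le hε0 hεS
  have hP0 : pairingFn 0 s = 2*σ/(σ^2+t^2) + 2*(1-σ)/((1-σ)^2+t^2) := by
    rw [pairingFn_eq]; norm_num; rfl
  have hPε : pairingFn ε s = 2*(σ+ε)/((σ+ε)^2+t^2) + 2*(1-σ+ε)/((1-σ+ε)^2+t^2) :=
    pairingFn_eq ε s
  have hPelow : 1/(9+t^2) ≤ pairingFn ε s := by
    rw [hPε]; exact Plow σ t ε hσ0 hσ1 hε0 hε2
  have hPe0 : 0 ≤ pairingFn ε s := le_trans (by positivity) hPelow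
  rcases hreg with h1 | h2 | h3
  · -- Region R₁ : 1 ≤ |t|
    have ht2 : 1 ≤ t^2 := by
      rw [← sq_abs]; nlinarith [abs_nonneg t]
    have ht0 : 0 < t^2 := by linarith
    have d1 := termB σ t ε hσ0.le hσ1.le hε0 hε2 ht0
    have d2 := termB (1-σ) t ε (by linarith) (by linarith) hε0 hε2 ht0
    have htri : |pairingFn 0 s - pairingFn ε s| ≤ 4*ε*(3+t^2)/(t^2*t^2) := by
      rw [hP0, hPε, show (2*σ/(σ^2+t^2) + 2*(1-σ)/((1-σ)^2+t^2))
          - (2*(σ+ε)/((σ+ε)^2+t^2) + 2*(1-σ+ε)/((1-σ+ε)^2+t^2))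
        = (2*σ/(σ^2+t^2) - 2*(σ+ε)/((σ+ε)^2+t^2))
          + (2*(1-σ)/((1-σ)^2+t^2) - 2*(1-σ+ε)/((1-σ+ε)^2+t^2)) from by ring]
      refine (abs_add_le _ _).trans ?_
      calc _ ≤ 2*ε*(3+t^2)/(t^2*t^2) + 2*ε*(3+t^2)/(t^2*t^2) := add_le_add d1 d2
        _ = 4*ε*(3+t^2)/(t^2*t^2) := by ring
    have step : 4*ε*(3+t^2)/(t^2*t^2) ≤ 1000000*S*(1/(9+t^2)) := by
      rw [show (1000000:ℝ)*S*(1/(9+t^2)) = (1000000*S)/(9+t^2) from by ring,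
        div_le_div_iff₀ (by positivity) (by positivity)]
      have e1 : 3+t^2 ≤ 4*t^2 := by linarith
      have e2 : 9+t^2 ≤ 10*t^2 := by linarith
      have e3 : (3+t^2)*(9+t^2) ≤ 4*t^2*(10*t^2) :=
        mul_le_mul e1 e2 (by positivity) (by positivity)
      have e4 : ε*((3+t^2)*(9+t^2)) ≤ ε*(4*t^2*(10*t^2)) :=
        mul_le_mul_of_nonneg_left e3 hε0.le
      have e5 : 160*ε ≤ 1000000*S := by linarith
      have e6 : (160*ε)*(t^2*t^2) ≤ (1000000*S)*(t^2*t^2) :=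
        mul_le_mul_of_nonneg_right e5 (by positivity)
      nlinarith [e4, e6]
    calc |pairingFn 0 s - pairingFn ε s| ≤ 4*ε*(3+t^2)/(t^2*t^2) := htri
      _ ≤ 1000000*S*(1/(9+t^2)) := step
      _ ≤ 1000000*S*pairingFn ε s := by
          exact mul_le_mul_of_nonneg_left hPelow (by positivity)
  · -- Region R₂
    obtain ⟨-, -, htlb, htub⟩ := h2
    have hEinv : 1/E ≤ 1/(1.17:ℝ) := one_div_le_one_div_of_le (by norm_num) hE117
    have h8 : (1:ℝ)/8 ≤ |t| := by
      have : (1:ℝ) - 1/(1.17:ℝ) ≤ 1 - 1/E := by linarith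
      have h117 : (1:ℝ)/8 ≤ 1 - 1/(1.17:ℝ) := by norm_num
      linarith
    have ht2 : 1/64 ≤ t^2 := by rw [← sq_abs]; nlinarith
    have ht2u : t^2 ≤ 1 := by rw [← sq_abs]; nlinarith [abs_nonneg t]
    have ht0 : 0 < t^2 := by linarith
    have d1 := termB σ t ε hσ0.le hσ1.le hε0 hε2 ht0
    have d2 := termB (1-σ) t ε (by linarith) (by linarith) hε0 hε2 ht0
    have htri : |pairingFn 0 s - pairingFn ε s| ≤ 4*ε*(3+t^2)/(t^2*t^2) := by
      rw [hP0, hPε, show (2*σ/(σ^2+t^2) + 2*(1-σ)/((1-σ)^2+t^2))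
          - (2*(σ+ε)/((σ+ε)^2+t^2) + 2*(1-σ+ε)/((1-σ+ε)^2+t^2))
        = (2*σ/(σ^2+t^2) - 2*(σ+ε)/((σ+ε)^2+t^2))
          + (2*(1-σ)/((1-σ)^2+t^2) - 2*(1-σ+ε)/((1-σ+ε)^2+t^2)) from by ring]
      refine (abs_add_le _ _).trans ?_
      calc _ ≤ 2*ε*(3+t^2)/(t^2*t^2) + 2*ε*(3+t^2)/(t^2*t^2) := add_le_add d1 d2
        _ = 4*ε*(3+t^2)/(t^2*t^2) := by ring
    have hb : 4*ε*(3+t^2)/(t^2*t^2) ≤ 100000*ε := by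
      rw [div_le_iff₀ (by positivity)]
      nlinarith [mul_nonneg hε0.le (by linarith : (0:ℝ) ≤ t^2 - 1/64),
        mul_nonneg (mul_nonneg hε0.le (by linarith : (0:ℝ) ≤ t^2 - 1/64)) ht0.le,
        mul_nonneg hε0.le (by linarith : (0:ℝ) ≤ 1 - t^2)]
    have h10 : 1/10 ≤ pairingFn ε s := by
      refine le_trans ?_ hPelow
      apply one_div_le_one_div_of_le (by positivity)
      linarith
    have hfin : 100000*ε ≤ 1000000*S*pairingFn ε s := by
      have k1 : ε * (1/10) ≤ ε * pairingFn ε s :=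
        mul_le_mul_of_nonneg_left h10 hε0.le
      have k2 : ε * pairingFn ε s ≤ S * pairingFn ε s :=
        mul_le_mul_of_nonneg_right hεS hPe0
      linarith
    calc |pairingFn 0 s - pairingFn ε s| ≤ 4*ε*(3+t^2)/(t^2*t^2) := htri
      _ ≤ 100000*ε := hb
      _ ≤ 1000000*S*pairingFn ε s := hfin
  · -- Region R₃
    obtain ⟨ha, hb, -⟩ := h3
    have hσ1' : 0 < 1 - σ := by linarith
    have hFσ : 1 ≤ F * σ := by
      rw [div_le_iff₀ hF0] at ha; linarith [mul_comm σ F]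
    have hFσ' : 1 ≤ F * (1-σ) := by
      have : 1/F ≤ 1 - σ := by linarith
      rw [div_le_iff₀ hF0] at this; linarith [mul_comm (1-σ) F]
    have d1 := termR3 σ t ε F hσ0 hε0 hFσ
    have d2 := termR3 (1-σ) t ε F hσ1' hε0 hFσ'
    have htri : |pairingFn 0 s - pairingFn ε s| ≤ 2*ε*F*pairingFn ε s := by
      rw [hP0, hPε, show (2*σ/(σ^2+t^2) + 2*(1-σ)/((1-σ)^2+t^2))
          - (2*(σ+ε)/((σ+ε)^2+t^2) + 2*(1-σ+ε)/((1-σ+ε)^2+t^2))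
        = (2*σ/(σ^2+t^2) - 2*(σ+ε)/((σ+ε)^2+t^2))
          + (2*(1-σ)/((1-σ)^2+t^2) - 2*(1-σ+ε)/((1-σ+ε)^2+t^2)) from by ring]
      refine (abs_add_le _ _).trans ?_
      calc _ ≤ 2*ε*F * (2*(σ+ε)/((σ+ε)^2+t^2)) + 2*ε*F * (2*(1-σ+ε)/((1-σ+ε)^2+t^2)) :=
            add_le_add d1 d2
        _ = 2*ε*F*(2*(σ+ε)/((σ+ε)^2+t^2) + 2*(1-σ+ε)/((1-σ+ε)^2+t^2)) := by ring
    have h4S : 2*ε*F*pairingFn ε s = 4*S*pairingFn ε s := by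
      rw [show 2*ε*F = 2*(F*ε) from by ring, hFε]; ring
    calc |pairingFn 0 s - pairingFn ε s| ≤ 2*ε*F*pairingFn ε s := htri
      _ = 4*S*pairingFn ε s := h4S
      _ ≤ 1000000*S*pairingFn ε s :=
          mul_le_mul_of_nonneg_right (by linarith : (4:ℝ)*S ≤ 1000000*S) hPe0
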